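/- Fix x̌, x̂ ∈ ℝⁿ with x̌⁽ˡ⁾ ≤ x̂⁽ˡ⁾ for every l, let g be the associated erf-product function, let v̄ = (x̌ + x̂)/2, and let ž, ẑ ∈ ℝⁿ with ž⁽ˡ⁾ ≤ ẑ⁽ˡ⁾ for all l. Define z_max ∈ ℝⁿ coordinatewise by z_max⁽ˡ⁾ = v̄⁽ˡ⁾ if v̄⁽ˡ⁾ ∈ [ž⁽ˡ⁾, ẑ⁽ˡ⁾] and otherwise the endpoint of [ž⁽ˡ⁾, ẑ⁽ˡ⁾] closer to v̄⁽ˡ⁾, and define z_min ∈ ℝⁿ coordinatewise as the endpoint of [ž⁽ˡ⁾, ẑ⁽ˡ⁾] farther from v̄⁽ˡ⁾. Then for every z in the box [ž, ẑ], the mass assigned to the box [x̌, x̂] by the product measure on ℝⁿ whose l-th factor is the Gaussian measure with mean z⁽ˡ⁾ and variance 1 lies in the interval [g(z_min), g(z_max)]. -/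

import Mathlib

open MeasureTheory ProbabilityTheory

/-- The Gauss error function `erf x = (2/√π) ∫₀ˣ exp (−t²) dt`. -/
noncomputable def erf (x : ℝ) : ℝ :=
  (2 / Real.sqrt Real.pi) * ∫ t in (0:ℝ)..x, Real.exp (-t ^ 2)

/-- The erf-product function
`g z = 2⁻ⁿ ∏ₗ (erf((zₗ − x̌ₗ)/√2) − erf((zₗ − x̂ₗ)/√2))`. -/
noncomputable def gerf {n : ℕ} (xlo xhi : Fin n → ℝ) (z : Fin n → ℝ) : ℝ :=
  (1 / 2 : ℝ) ^ n *
    ∏ l, (erf ((z l - xlo l) / Real.sqrt 2) - erf ((z l - xhi l) / Real.sqrt 2))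

/- ### Auxiliary lemmas about `erf` -/

lemma expsq_cont : Continuous fun t : ℝ => Real.exp (-t ^ 2) :=
  Real.continuous_exp.comp (by continuity)

lemma erf_neg (x : ℝ) : erf (-x) = - erf x := by
  unfold erf
  have h1 : (∫ t in (0:ℝ)..(-x), Real.exp (-t ^ 2))
      = ∫ t in (0:ℝ)..(-x), Real.exp (-(-t) ^ 2) := by
    congr 1; ext t; ring_nf
  rw [h1, intervalIntegral.integral_comp_neg (fun t => Real.exp (-t ^ 2)),
    neg_zero, intervalIntegral.integral_symm, neg_neg]
  ring

lemma erf_sub_eq (a b : ℝ) :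
    erf b - erf a = (2 / Real.sqrt Real.pi) * ∫ t in a..b, Real.exp (-t ^ 2) := by
  unfold erf
  rw [← mul_sub,
    intervalIntegral.integral_interval_sub_left (μ := volume)
      (expsq_cont.intervalIntegrable 0 b) (expsq_cont.intervalIntegrable 0 a)]

lemma erf_mono : Monotone erf := by
  intro a b hab
  have h := erf_sub_eq a b
  have hpos : 0 ≤ ∫ t in a..b, Real.exp (-t ^ 2) :=
    intervalIntegral.integral_nonneg hab (fun t _ => (Real.exp_pos _).le)
  nlinarith [Real.sqrt_nonneg Real.pi,
    div_nonneg (by norm_num : (0:ℝ) ≤ 2) (Real.sqrt_nonneg Real.pi)]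

lemma hasDerivAt_erf (x : ℝ) :
    HasDerivAt erf (2 / Real.sqrt Real.pi * Real.exp (-x ^ 2)) x := by
  have h := intervalIntegral.integral_hasDerivAt_right
    (expsq_cont.intervalIntegrable 0 x)
    (expsq_cont.stronglyMeasurable.stronglyMeasurableAtFilter) expsq_cont.continuousAt
  exact h.const_mul (2 / Real.sqrt Real.pi)

/- ### The Gaussian mass of an interval -/

lemma gauss_interval (m a b : ℝ) (hab : a ≤ b) :
    gaussianReal m 1 (Set.Icc a b) =
      ENNReal.ofReal ((erf ((m - a) / Real.sqrt 2) - erf ((m - b) / Real.sqrt 2)) / 2) := by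
  rw [gaussianReal_apply_eq_integral _ one_ne_zero]
  congr 1
  rw [MeasureTheory.integral_Icc_eq_integral_Ioc, ← intervalIntegral.integral_of_le hab]
  have hpdf : ∀ x : ℝ, gaussianPDFReal m 1 x
      = (Real.sqrt (2 * Real.pi))⁻¹ * Real.exp (-(((x - m) / Real.sqrt 2)) ^ 2) := by
    intro x
    unfold gaussianPDFReal
    rw [div_pow, Real.sq_sqrt (by norm_num : (0:ℝ) ≤ 2)]
    push_cast
    ring_nf
  simp only [hpdf]
  rw [intervalIntegral.integral_const_mul]
  have h1 : (∫ x in a..b, Real.exp (-((x - m) / Real.sqrt 2) ^ 2))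
      = ∫ x in (a-m)..(b-m), Real.exp (-(x / Real.sqrt 2) ^ 2) :=
    intervalIntegral.integral_comp_sub_right (fun y => Real.exp (-(y / Real.sqrt 2) ^ 2)) m
  have h2 : (∫ x in (a-m)..(b-m), Real.exp (-(x / Real.sqrt 2) ^ 2))
      = Real.sqrt 2 • ∫ t in ((a-m)/Real.sqrt 2)..((b-m)/Real.sqrt 2), Real.exp (-t ^ 2) :=
    intervalIntegral.integral_comp_div (fun t => Real.exp (-t ^ 2))
      (by positivity : Real.sqrt 2 ≠ 0)
  have h3 : (∫ t in ((a-m)/Real.sqrt 2)..((b-m)/Real.sqrt 2), Real.exp (-t ^ 2))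
      = Real.sqrt Real.pi / 2 * (erf ((b-m)/Real.sqrt 2) - erf ((a-m)/Real.sqrt 2)) := by
    rw [erf_sub_eq]
    field_simp
  rw [h1, h2, h3]
  have e1 : erf ((b-m)/Real.sqrt 2) = - erf ((m-b)/Real.sqrt 2) := by
    rw [show (b-m)/Real.sqrt 2 = -((m-b)/Real.sqrt 2) by ring, erf_neg]
  have e2 : erf ((a-m)/Real.sqrt 2) = - erf ((m-a)/Real.sqrt 2) := by
    rw [show (a-m)/Real.sqrt 2 = -((m-a)/Real.sqrt 2) by ring, erf_neg]
  rw [e1, e2, Real.sqrt_mul (by norm_num : (0:ℝ) ≤ 2)]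
  have hs2 : Real.sqrt 2 > 0 := by positivity
  have hsp : Real.sqrt Real.pi > 0 := Real.sqrt_pos.mpr Real.pi_pos
  field_simp
  ring

/- ### The symmetric one-dimensional factor and its unimodality -/

noncomputable def Ferf (c d : ℝ) : ℝ :=
  erf ((d + c) / Real.sqrt 2) - erf ((d - c) / Real.sqrt 2)

lemma Ferf_nonneg (c d : ℝ) (hc : 0 ≤ c) : 0 ≤ Ferf c d := by
  unfold Ferf
  have : (d - c) / Real.sqrt 2 ≤ (d + c) / Real.sqrt 2 :=
    div_le_div_of_nonneg_right (by linarith) (by positivity) |>.trans_eq rfl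
  linarith [erf_mono this]

lemma Ferf_even (c d : ℝ) : Ferf c (-d) = Ferf c d := by
  unfold Ferf
  rw [show (-d + c) / Real.sqrt 2 = -((d - c) / Real.sqrt 2) by ring,
      show (-d - c) / Real.sqrt 2 = -((d + c) / Real.sqrt 2) by ring,
      erf_neg, erf_neg]
  ring

lemma Ferf_hasDerivAt (c d : ℝ) :
    HasDerivAt (Ferf c)
      (2 / Real.sqrt Real.pi * Real.exp (-((d + c) / Real.sqrt 2) ^ 2) * (1 / Real.sqrt 2)
        - 2 / Real.sqrt Real.pi * Real.exp (-((d - c) / Real.sqrt 2) ^ 2)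
          * (1 / Real.sqrt 2)) d := by
  have h1 : HasDerivAt (fun d : ℝ => (d + c) / Real.sqrt 2) (1 / Real.sqrt 2) d := by
    simpa using ((hasDerivAt_id d).add_const c).div_const (Real.sqrt 2)
  have h2 : HasDerivAt (fun d : ℝ => (d - c) / Real.sqrt 2) (1 / Real.sqrt 2) d := by
    simpa using ((hasDerivAt_id d).sub_const c).div_const (Real.sqrt 2)
  exact ((hasDerivAt_erf _).comp d h1).sub ((hasDerivAt_erf _).comp d h2)

lemma Ferf_anti (c : ℝ) (hc : 0 ≤ c) : AntitoneOn (Ferf c) (Set.Ici 0) := by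
  have hdiff : Differentiable ℝ (Ferf c) := fun d => (Ferf_hasDerivAt c d).differentiableAt
  apply antitoneOn_of_deriv_nonpos (convex_Ici 0) hdiff.continuous.continuousOn
    (fun d _ => (hdiff d).differentiableWithinAt)
  intro d hd
  rw [interior_Ici] at hd
  rw [(Ferf_hasDerivAt c d).deriv]
  have hsq : ((d - c) / Real.sqrt 2) ^ 2 ≤ ((d + c) / Real.sqrt 2) ^ 2 := by
    rw [div_pow, div_pow]
    apply div_le_div_of_nonneg_right _ (by positivity)
    nlinarith [le_of_lt (show (0:ℝ) < d from hd)]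
  have hexp : Real.exp (-((d + c) / Real.sqrt 2) ^ 2)
      ≤ Real.exp (-((d - c) / Real.sqrt 2) ^ 2) := Real.exp_le_exp.mpr (by linarith)
  have hK : (0:ℝ) ≤ 2 / Real.sqrt Real.pi * (1 / Real.sqrt 2) := by positivity
  nlinarith [hexp, hK]

lemma Ferf_abs_anti (c : ℝ) (hc : 0 ≤ c) {d1 d2 : ℝ} (h : |d1| ≤ |d2|) :
    Ferf c d2 ≤ Ferf c d1 := by
  have key : ∀ d : ℝ, Ferf c d = Ferf c |d| := by
    intro d
    rcases abs_cases d with ⟨h1, _⟩ | ⟨h1, _⟩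
    · rw [h1]
    · rw [h1, Ferf_even]
  rw [key d1, key d2]
  exact Ferf_anti c hc (abs_nonneg d1) (abs_nonneg d2) h

lemma factor_eq_Ferf (a b z : ℝ) :
    erf ((z - a) / Real.sqrt 2) - erf ((z - b) / Real.sqrt 2)
      = Ferf ((b - a) / 2) (z - (a + b) / 2) := by
  unfold Ferf
  rw [show z - (a + b) / 2 + (b - a) / 2 = z - a by ring,
      show z - (a + b) / 2 - (b - a) / 2 = z - b by ring]

/- ### Distance comparisons for `zmax` and `zmin` -/

lemma zmax_abs_le (v zlo zhi z zm : ℝ) (h1 : zlo ≤ z) (h2 : z ≤ zhi)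
    (hzm : zm = if v ∈ Set.Icc zlo zhi then v
      else if |zlo - v| ≤ |zhi - v| then zlo else zhi) :
    |zm - v| ≤ |z - v| := by
  subst hzm
  by_cases hv : v ∈ Set.Icc zlo zhi
  · simp [hv]
  · rw [if_neg hv]
    rw [Set.mem_Icc, not_and_or, not_le, not_le] at hv
    split_ifs with hc <;> rcases hv with hv | hv <;>
      rcases abs_cases (zlo - v) with ⟨e1, _⟩ | ⟨e1, _⟩ <;>
      rcases abs_cases (zhi - v) with ⟨e2, _⟩ | ⟨e2, _⟩ <;>
      rcases abs_cases (z - v) with ⟨e3, _⟩ | ⟨e3, _⟩ <;> linarith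

lemma zmin_abs_ge (v zlo zhi z zm : ℝ) (h1 : zlo ≤ z) (h2 : z ≤ zhi)
    (hzm : zm = if |zhi - v| ≤ |zlo - v| then zlo else zhi) :
    |z - v| ≤ |zm - v| := by
  subst hzm
  split_ifs with hc <;>
    rcases abs_cases (zlo - v) with ⟨e1, _⟩ | ⟨e1, _⟩ <;>
    rcases abs_cases (zhi - v) with ⟨e2, _⟩ | ⟨e2, _⟩ <;>
    rcases abs_cases (z - v) with ⟨e3, _⟩ | ⟨e3, _⟩ <;> linarith

/- ### `gerf` as a product of halves -/

lemma gerf_eq_prod {n : ℕ} (xlo xhi : Fin n → ℝ) (z : Fin n → ℝ) :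
    gerf xlo xhi z = ∏ l,
      (erf ((z l - xlo l) / Real.sqrt 2) - erf ((z l - xhi l) / Real.sqrt 2)) / 2 := by
  unfold gerf
  rw [Finset.prod_div_distrib, Finset.prod_const]
  simp [Finset.card_univ]
  ring

/- ### Main theorem -/

/-- Theorem 1 combined with formula (3): for every mean vector `z` in
the box `[ž, ẑ]`, the mass assigned to the target box `[x̌, x̂]` by the product of
unit-variance Gaussians with means `z l` lies between `g z_min` and `g z_max`. -/
theorem pi_gaussian_mass_between_gerf_bounds
    {n : ℕ} (xlo xhi : Fin n → ℝ) (hx : ∀ l, xlo l ≤ xhi l)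
    (zlo zhi : Fin n → ℝ) (hz : ∀ l, zlo l ≤ zhi l)
    (vbar : Fin n → ℝ) (hvbar : vbar = fun l => (xlo l + xhi l) / 2)
    (zmax : Fin n → ℝ)
    (hzmax : ∀ l, zmax l =
      if vbar l ∈ Set.Icc (zlo l) (zhi l) then vbar l
      else if |zlo l - vbar l| ≤ |zhi l - vbar l| then zlo l else zhi l)
    (zmin : Fin n → ℝ)
    (hzmin : ∀ l, zmin l =
      if |zhi l - vbar l| ≤ |zlo l - vbar l| then zlo l else zhi l) :
    ∀ z ∈ Set.Icc zlo zhi,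
      Measure.pi (fun l : Fin n => gaussianReal (z l) 1) (Set.Icc xlo xhi) ∈
        Set.Icc (ENNReal.ofReal (gerf xlo xhi zmin))
          (ENNReal.ofReal (gerf xlo xhi zmax)) := by
  intro z hzmem
  obtain ⟨hzl, hzu⟩ := hzmem
  -- the one-dimensional factor as a real function
  set f : (Fin n → ℝ) → Fin n → ℝ := fun w l =>
    (erf ((w l - xlo l) / Real.sqrt 2) - erf ((w l - xhi l) / Real.sqrt 2)) / 2 with hf
  have hc : ∀ l, (0:ℝ) ≤ (xhi l - xlo l) / 2 := fun l => by linarith [hx l]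
  -- pointwise rewrite through Ferf
  have hfF : ∀ (w : Fin n → ℝ) l, f w l
      = Ferf ((xhi l - xlo l) / 2) (w l - vbar l) / 2 := by
    intro w l
    have hv : vbar l = (xlo l + xhi l) / 2 := by rw [hvbar]
    show (erf ((w l - xlo l) / Real.sqrt 2) - erf ((w l - xhi l) / Real.sqrt 2)) / 2 = _
    rw [factor_eq_Ferf, hv]
  -- nonnegativity and comparisons
  have hnonneg : ∀ (w : Fin n → ℝ) l, 0 ≤ f w l := by
    intro w l
    rw [hfF]
    have := Ferf_nonneg ((xhi l - xlo l) / 2) (w l - vbar l) (hc l)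
    linarith
  have hmin_le : ∀ l, f zmin l ≤ f z l := by
    intro l
    rw [hfF, hfF]
    have habs : |z l - vbar l| ≤ |zmin l - vbar l| :=
      zmin_abs_ge (vbar l) (zlo l) (zhi l) (z l) (zmin l) (hzl l) (hzu l) (hzmin l)
    have := Ferf_abs_anti ((xhi l - xlo l) / 2) (hc l) habs
    linarith
  have hle_max : ∀ l, f z l ≤ f zmax l := by
    intro l
    rw [hfF, hfF]
    have habs : |zmax l - vbar l| ≤ |z l - vbar l| :=
      zmax_abs_le (vbar l) (zlo l) (zhi l) (z l) (zmax l) (hzl l) (hzu l) (hzmax l)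
    have := Ferf_abs_anti ((xhi l - xlo l) / 2) (hc l) habs
    linarith
  -- compute the product measure of the box
  have hbox : Measure.pi (fun l : Fin n => gaussianReal (z l) 1) (Set.Icc xlo xhi)
      = ENNReal.ofReal (∏ l, f z l) := by
    rw [← Set.pi_univ_Icc, Measure.pi_pi]
    have : ∀ l, gaussianReal (z l) 1 (Set.Icc (xlo l) (xhi l))
        = ENNReal.ofReal (f z l) := fun l => gauss_interval (z l) (xlo l) (xhi l) (hx l)
    rw [Finset.prod_congr rfl (fun l _ => this l),
      ← ENNReal.ofReal_prod_of_nonneg (fun l _ => hnonneg z l)]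
  rw [hbox]
  constructor
  · rw [gerf_eq_prod]
    exact ENNReal.ofReal_le_ofReal
      (Finset.prod_le_prod (fun l _ => hnonneg zmin l) (fun l _ => hmin_le l))
  · rw [gerf_eq_prod]
    exact ENNReal.ofReal_le_ofReal
      (Finset.prod_le_prod (fun l _ => hnonneg z l) (fun l _ => hle_max l))
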